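/- arXiv:2309.11296 — 2 statements merged into one kernel-verified Lean document; each statement's English description precedes it below -/
import Mathlib

section
/- If K : ℝⁿ → [0,+∞] is measurable with K(-x) = K(x) a.e. and ∫_{ℝⁿ} min{1,|x|} K(x) dx < +∞, then for every measurable set E ⊂ ℝⁿ with finite Lebesgue measure and finite Euclidean perimeter, the non-local K-perimeter P_K(E) = (1/2)∫∫ |χ_E(x) − χ_E(y)| K(x−y) dx dy satisfies P_K(E) ≤ max{ (1/2) P(E), |E| } · ∫_{ℝⁿ} min{1,|x|} K(x) dx; in particular P_K(E) < +∞. -/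
open MeasureTheory Metric Set
open scoped ENNReal RealInnerProductSpace

theorem seg_frontier {X : Type*} [TopologicalSpace X] {s E : Set X} (hs : IsPreconnected s)
    (h1 : (s ∩ E).Nonempty) (h2 : (s \ E).Nonempty) : (s ∩ frontier E).Nonempty := by
  by_contra h
  rw [not_nonempty_iff_eq_empty] at h
  have hsub : s ⊆ interior E ∪ interior Eᶜ := by
    intro x hx
    have hxf : x ∉ frontier E := fun hf => (eq_empty_iff_forall_notMem.1 h x) ⟨hx, hf⟩
    have : x ∈ (frontier E)ᶜ := hxf
    rw [compl_frontier_eq_union_interior] at this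
    exact this
  have h1' : (s ∩ interior E).Nonempty := by
    obtain ⟨x, hxs, hxE⟩ := h1
    rcases hsub hxs with hi | hi
    · exact ⟨x, hxs, hi⟩
    · exact absurd (interior_subset hi) (by simpa using hxE)
  have h2' : (s ∩ interior Eᶜ).Nonempty := by
    obtain ⟨x, hxs, hxE⟩ := h2
    rcases hsub hxs with hi | hi
    · exact absurd (interior_subset hi) (by simpa using hxE)
    · exact ⟨x, hxs, hi⟩
  obtain ⟨x, hxs, hxE, hxE'⟩ := hs (interior E) (interior Eᶜ) isOpen_interior isOpen_interior hsub h1' h2'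
  exact (interior_subset hxE') (interior_subset hxE)

theorem volBox {n : ℕ} (b : OrthonormalBasis (Fin n) ℝ (EuclideanSpace ℝ (Fin n)))
    (A : Set (EuclideanSpace ℝ (Fin n))) (r : Fin n → ℝ) (hA : A.Nonempty)
    (h : ∀ x ∈ A, ∀ y ∈ A, ∀ i, |⟪x, b i⟫ - ⟪y, b i⟫| ≤ r i) :
    volume A ≤ ∏ i, ENNReal.ofReal (r i) := by
  obtain ⟨a, ha⟩ := hA
  set l : Fin n → ℝ := fun i => sInf ((fun x => ⟪x, b i⟫) '' A) with hl
  have hbdd : ∀ i, BddBelow ((fun x => ⟪x, b i⟫) '' A) := by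
    intro i
    refine ⟨⟪a, b i⟫ - r i, ?_⟩
    rintro v ⟨x, hx, rfl⟩
    have := (abs_le.1 (h a ha x hx i)).2
    simp only []
    linarith
  have hmem : ∀ x ∈ A, ∀ i, ⟪x, b i⟫ ∈ Icc (l i) (l i + r i) := by
    intro x hx i
    constructor
    · exact csInf_le (hbdd i) ⟨x, hx, rfl⟩
    · have : ⟪x, b i⟫ - r i ≤ l i := by
        refine le_csInf ⟨⟪a, b i⟫, ⟨a, ha, rfl⟩⟩ ?_
        rintro v ⟨y, hy, rfl⟩
        have := (abs_le.1 (h x hx y hy i)).2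
        simp only []
        linarith
      linarith
  have hsub : A ⊆ b.repr ⁻¹' (WithLp.ofLp ⁻¹' (Set.univ.pi fun i => Icc (l i) (l i + r i))) := by
    intro x hx i _
    have hxi : b.repr x i = ⟪x, b i⟫ := by
      rw [b.repr_apply_apply, real_inner_comm]
    rw [hxi]
    exact hmem x hx i
  refine (measure_mono hsub).trans ?_
  rw [b.measurePreserving_repr.measure_preimage
    ((PiLp.volume_preserving_ofLp (Fin n)).measurable
      (MeasurableSet.univ_pi fun i => measurableSet_Icc)).nullMeasurableSet]
  rw [(PiLp.volume_preserving_ofLp (Fin n)).measure_preimage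
    (MeasurableSet.univ_pi fun i => measurableSet_Icc).nullMeasurableSet, volume_pi_pi]
  simp [Real.volume_Icc]

theorem volTube {n : ℕ} (hn : 1 ≤ n) (U : Set (EuclideanSpace ℝ (Fin n)))
    (z : EuclideanSpace ℝ (Fin n)) (hz : z ≠ 0) :
    volume {x | ∃ u ∈ U, ∃ s ∈ Icc (0:ℝ) 1, x = u + s • z}
      ≤ (EMetric.diam U + ENNReal.ofReal ‖z‖) * EMetric.diam U ^ ((n:ℝ) - 1) := by
  rcases U.eq_empty_or_nonempty with rfl | hU
  · simp
  rcases eq_or_ne (EMetric.diam U) ⊤ with htop | htop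
  · rw [htop]
    have h1 : (⊤ : ℝ≥0∞) + ENNReal.ofReal ‖z‖ = ⊤ := by simp
    have h2 : (⊤ : ℝ≥0∞) ^ ((n:ℝ) - 1) ≠ 0 := by
      rcases eq_or_lt_of_le (show (0:ℝ) ≤ (n:ℝ) - 1 by
        have : (1:ℝ) ≤ n := by exact_mod_cast hn
        linarith) with h' | h'
      · rw [← h', ENNReal.rpow_zero]; simp
      · rw [ENNReal.top_rpow_of_pos h']; simp
    rw [h1, ENNReal.top_mul h2]
    exact le_top
  -- main case
  set e : EuclideanSpace ℝ (Fin n) := ‖z‖⁻¹ • z with he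
  set i₀ : Fin n := ⟨0, hn⟩ with hi₀
  set b₀ := EuclideanSpace.basisFun (Fin n) ℝ with hb₀
  have hne : ‖e‖ = 1 := by
    rw [he, norm_smul, norm_inv, norm_norm, inv_mul_cancel₀ (norm_ne_zero_iff.2 hz)]
  set b := b₀.map (Submodule.reflection (ℝ ∙ ((b₀ i₀ : EuclideanSpace ℝ (Fin n)) - e))ᗮ) with hb
  have hbi₀ : b i₀ = e := by
    rw [hb, OrthonormalBasis.map_apply]
    exact Submodule.reflection_sub (by rw [b₀.orthonormal.1 i₀, hne])
  have hbound : Bornology.IsBounded U :=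
    Metric.isBounded_iff_ediam_ne_top.2 htop
  set d : ℝ := Metric.diam U with hd
  set r : Fin n → ℝ := fun i => if i = i₀ then d + ‖z‖ else d with hr
  have hz' : z = ‖z‖ • e := by
    rw [he, smul_smul, mul_inv_cancel₀ (norm_ne_zero_iff.2 hz), one_smul]
  have hinner : ∀ i, ⟪z, b i⟫ = if i = i₀ then ‖z‖ else 0 := by
    intro i
    rcases eq_or_ne i i₀ with rfl | hne'
    · rw [if_pos rfl, hbi₀, he, real_inner_smul_right, real_inner_self_eq_norm_sq]
      field_simp [norm_ne_zero_iff.2 hz]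
    · rw [if_neg hne']
      have h0 : ⟪e, b i⟫ = 0 := by
        rw [← hbi₀]; exact b.orthonormal.2 (Ne.symm hne')
      rw [hz', real_inner_smul_left, h0, mul_zero]
  have key : ∀ i, ∀ u ∈ U, ∀ u' ∈ U, |⟪u, b i⟫ - ⟪u', b i⟫| ≤ d := by
    intro i u hu u' hu'
    rw [← inner_sub_left]
    calc |⟪u - u', b i⟫| ≤ ‖u - u'‖ * ‖b i‖ := abs_real_inner_le_norm _ _
      _ = ‖u - u'‖ := by rw [b.orthonormal.1 i, mul_one]
      _ = dist u u' := (dist_eq_norm _ _).symm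
      _ ≤ d := Metric.dist_le_diam_of_mem hbound hu hu'
  have hVne : {x | ∃ u ∈ U, ∃ s ∈ Icc (0:ℝ) 1, x = u + s • z}.Nonempty := by
    obtain ⟨a, ha⟩ := hU
    exact ⟨a + (0:ℝ) • z, a, ha, 0, ⟨le_refl 0, zero_le_one⟩, rfl⟩
  refine (volBox b _ r hVne ?_).trans ?_
  · rintro x ⟨u, hu, s, hs, rfl⟩ y ⟨u', hu', s', hs', rfl⟩ i
    have habs : |s - s'| ≤ 1 := by
      rw [abs_sub_le_iff]; constructor <;> linarith [hs.1, hs.2, hs'.1, hs'.2]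
    have hexp : ⟪u + s • z, b i⟫ - ⟪u' + s' • z, b i⟫
        = (⟪u, b i⟫ - ⟪u', b i⟫) + (s - s') * ⟪z, b i⟫ := by
      rw [inner_add_left, inner_add_left, real_inner_smul_left, real_inner_smul_left]
      ring
    rcases eq_or_ne i i₀ with rfl | hne'
    · rw [hr]; simp only [if_pos rfl]
      rw [hexp, hinner i₀, if_pos rfl]
      calc |(⟪u, b i₀⟫ - ⟪u', b i₀⟫) + (s - s') * ‖z‖|
          ≤ |⟪u, b i₀⟫ - ⟪u', b i₀⟫| + |(s - s') * ‖z‖| := abs_add_le _ _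
        _ ≤ d + ‖z‖ := by
            refine add_le_add (key i₀ u hu u' hu') ?_
            rw [abs_mul, abs_of_nonneg (norm_nonneg z)]
            exact mul_le_of_le_one_left (norm_nonneg z) habs
    · rw [hr]; simp only [if_neg hne']
      rw [hexp, hinner i, if_neg hne', mul_zero, add_zero]
      exact key i u hu u' hu'
  · have hprod : ∏ i, ENNReal.ofReal (r i)
        = ENNReal.ofReal (d + ‖z‖) * ENNReal.ofReal d ^ (n - 1) := by
      have hfac : ∀ x ∈ Finset.univ.erase i₀,
          ENNReal.ofReal (r x) = ENNReal.ofReal d := by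
        intro x hx
        have hx' : r x = d := if_neg (Finset.ne_of_mem_erase hx)
        rw [hx']
      have ha : ∏ i, ENNReal.ofReal (r i)
          = ENNReal.ofReal (r i₀) * ∏ x ∈ Finset.univ.erase i₀, ENNReal.ofReal (r x) :=
        (Finset.mul_prod_erase _ _ (Finset.mem_univ i₀)).symm
      have hb2 : ∏ x ∈ Finset.univ.erase i₀, ENNReal.ofReal (r x)
          = ENNReal.ofReal d ^ (n - 1) := by
        rw [Finset.prod_congr rfl hfac, Finset.prod_const,
          Finset.card_erase_of_mem (Finset.mem_univ i₀),
          Finset.card_univ, Fintype.card_fin]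
      rw [ha, hb2, show r i₀ = d + ‖z‖ from if_pos rfl]
    rw [hprod]
    have h1 : ENNReal.ofReal (d + ‖z‖) = EMetric.diam U + ENNReal.ofReal ‖z‖ := by
      rw [ENNReal.ofReal_add Metric.diam_nonneg (norm_nonneg z)]
      congr 1
      rw [show Metric.diam U = (EMetric.diam U).toReal from rfl,
        ENNReal.ofReal_toReal htop]
    have h2 : ENNReal.ofReal d ^ (n - 1) = EMetric.diam U ^ ((n:ℝ) - 1) := by
      rw [hd, show Metric.diam U = (EMetric.diam U).toReal from rfl,
        ENNReal.ofReal_toReal htop]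
      rw [← ENNReal.rpow_natCast]
      congr 1
      rw [Nat.cast_sub hn, Nat.cast_one]
    rw [h1, h2]

theorem volT {n : ℕ} (S : Set (EuclideanSpace ℝ (Fin n)))
    (z : EuclideanSpace ℝ (Fin n)) (hz : z ≠ 0) (hS : μH[(n:ℝ)-1] S ≠ ⊤) :
    volume {x | ∃ t ∈ Icc (0:ℝ) 1, x - t • z ∈ S}
      ≤ ENNReal.ofReal ‖z‖ * μH[(n:ℝ)-1] S := by
  have hn : 1 ≤ n := by
    rcases Nat.eq_zero_or_pos n with rfl | h
    · exact absurd (by ext i; exact i.elim0 : z = 0) hz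
    · exact h
  set c : ℝ≥0∞ := ENNReal.ofReal ‖z‖ with hc
  have hc0 : c ≠ 0 := (ENNReal.ofReal_pos.2 (norm_pos_iff.2 hz)).ne'
  have hcT : c ≠ ⊤ := ENNReal.ofReal_ne_top
  set P : ℝ≥0∞ := μH[(n:ℝ)-1] S with hP
  have claim : ∀ δ ε₁ : ℝ≥0∞, 0 < δ → 0 < ε₁ →
      volume {x | ∃ t ∈ Icc (0:ℝ) 1, x - t • z ∈ S} ≤ (δ + c) * (P + ε₁) := by
    intro δ ε₁ hδ hε₁
    have h1 : (⨅ (t : ℕ → Set (EuclideanSpace ℝ (Fin n))) (_ : S ⊆ ⋃ k, t k)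
        (_ : ∀ k, EMetric.diam (t k) ≤ δ),
          ∑' k, ⨆ _ : (t k).Nonempty, EMetric.diam (t k) ^ ((n:ℝ)-1)) ≤ P := by
      rw [hP, Measure.hausdorffMeasure_apply]
      exact le_iSup₂ (f := fun (r : ℝ≥0∞) (_ : 0 < r) =>
        ⨅ (t : ℕ → Set (EuclideanSpace ℝ (Fin n))) (_ : S ⊆ ⋃ k, t k)
          (_ : ∀ k, EMetric.diam (t k) ≤ r),
          ∑' k, ⨆ _ : (t k).Nonempty, EMetric.diam (t k) ^ ((n:ℝ)-1)) δ hδ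
    have h2 := h1.trans_lt (ENNReal.lt_add_right hS hε₁.ne')
    rw [iInf_lt_iff] at h2
    obtain ⟨t, h2⟩ := h2
    rw [iInf_lt_iff] at h2
    obtain ⟨hcov, h2⟩ := h2
    rw [iInf_lt_iff] at h2
    obtain ⟨hdiam, hsum⟩ := h2
    have hTsub : {x | ∃ t ∈ Icc (0:ℝ) 1, x - t • z ∈ S}
        ⊆ ⋃ k, {x | ∃ u ∈ t k, ∃ s ∈ Icc (0:ℝ) 1, x = u + s • z} := by
      rintro x ⟨τ, hτ, hxS⟩
      obtain ⟨k, hk⟩ := mem_iUnion.1 (hcov hxS)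
      exact mem_iUnion.2 ⟨k, ⟨x - τ • z, hk, τ, hτ, (sub_add_cancel x (τ • z)).symm⟩⟩
    refine (measure_mono hTsub).trans ((measure_iUnion_le _).trans ?_)
    have hk : ∀ k, volume {x | ∃ u ∈ t k, ∃ s ∈ Icc (0:ℝ) 1, x = u + s • z}
        ≤ (δ + c) * ⨆ _ : (t k).Nonempty, EMetric.diam (t k) ^ ((n:ℝ)-1) := by
      intro k
      rcases (t k).eq_empty_or_nonempty with he | hne
      · have : {x | ∃ u ∈ t k, ∃ s ∈ Icc (0:ℝ) 1, x = u + s • z} = ∅ := by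
          rw [he]; ext x; simp
        rw [this]; simp
      · rw [iSup_pos hne]
        refine (volTube hn (t k) z hz).trans ?_
        exact mul_le_mul' (add_le_add (hdiam k) le_rfl) le_rfl
    refine (ENNReal.tsum_le_tsum hk).trans ?_
    rw [ENNReal.tsum_mul_left]
    exact mul_le_mul' le_rfl hsum.le
  refine ENNReal.le_of_forall_pos_le_add fun ε hε hfin => ?_
  set η : ℝ≥0∞ := (ε : ℝ≥0∞) / 2 with hη
  have hη0 : η ≠ 0 := by
    simp [hη, ENNReal.div_eq_zero_iff]
    exact_mod_cast hε.ne'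
  have hηT : η ≠ ⊤ := (ENNReal.div_lt_top ENNReal.coe_ne_top (by norm_num)).ne
  set ε₁ : ℝ≥0∞ := η / c with hε₁
  have hε₁0 : 0 < ε₁ := ENNReal.div_pos hη0 hcT
  have hε₁T : ε₁ ≠ ⊤ := (ENNReal.div_lt_top hηT hc0).ne
  have hPε : P + ε₁ ≠ ⊤ := by
    simp [ENNReal.add_ne_top]
    exact ⟨hS, hε₁T⟩
  have hPε0 : P + ε₁ ≠ 0 := (lt_of_lt_of_le hε₁0 le_add_self).ne'
  set δ : ℝ≥0∞ := η / (P + ε₁) with hδ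
  have hδ0 : 0 < δ := ENNReal.div_pos hη0 hPε
  have hbound := claim δ ε₁ hδ0 hε₁0
  refine hbound.trans ?_
  have hδm : δ * (P + ε₁) ≤ η := by
    rw [hδ, mul_comm]
    exact ENNReal.mul_div_le
  have hcε : c * ε₁ ≤ η := by
    rw [hε₁]
    exact ENNReal.mul_div_le
  calc (δ + c) * (P + ε₁) = δ * (P + ε₁) + (c * P + c * ε₁) := by ring
    _ ≤ η + (c * P + η) := add_le_add hδm (add_le_add le_rfl hcε)
    _ = c * P + (η + η) := by ring
    _ = c * P + ε := by rw [ENNReal.add_halves]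

noncomputable def LK {n : ℕ} (K : EuclideanSpace ℝ (Fin n) → ℝ≥0∞)
    (E F : Set (EuclideanSpace ℝ (Fin n))) : ℝ≥0∞ :=
  ∫⁻ x in E, ∫⁻ y in F, K (x - y)

open Classical in
/-- The non-local `K`-perimeter `P_K(E) = (1/2) ∬ |χ_E(x) - χ_E(y)| K(x-y) dx dy`. -/
noncomputable def PK {n : ℕ} (K : EuclideanSpace ℝ (Fin n) → ℝ≥0∞)
    (E : Set (EuclideanSpace ℝ (Fin n))) : ℝ≥0∞ :=
  (1 / 2) * ∫⁻ x, ∫⁻ y, (if (x ∈ E) = (y ∈ E) then 0 else K (x - y))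

theorem stmt0 (n : ℕ) (K : EuclideanSpace ℝ (Fin n) → ℝ≥0∞)
    (hKmeas : Measurable K)
    (hKsym : ∀ᵐ x : EuclideanSpace ℝ (Fin n), K (-x) = K x)
    (hKint : (∫⁻ x : EuclideanSpace ℝ (Fin n), min 1 (ENNReal.ofReal ‖x‖) * K x) < ⊤)
    (E : Set (EuclideanSpace ℝ (Fin n))) (hE : MeasurableSet E)
    (hvol : volume E < ⊤)
    (hper : μH[(n : ℝ) - 1] (frontier E) < ⊤) :
    PK K E ≤ max ((1 / 2) * μH[(n : ℝ) - 1] (frontier E)) (volume E) *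
        ∫⁻ x : EuclideanSpace ℝ (Fin n), min 1 (ENNReal.ofReal ‖x‖) * K x ∧
      PK K E < ⊤ := by
  classical
  set I : ℝ≥0∞ := ∫⁻ x : EuclideanSpace ℝ (Fin n), min 1 (ENNReal.ofReal ‖x‖) * K x with hI
  set M : ℝ≥0∞ := max ((1 / 2) * μH[(n : ℝ) - 1] (frontier E)) (volume E) with hM
  set D : EuclideanSpace ℝ (Fin n) → Set (EuclideanSpace ℝ (Fin n)) :=
    fun z => {x | ¬ ((x ∈ E) = ((x - z) ∈ E))} with hD
  -- measurability of the product set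
  have hprodset : MeasurableSet {q : EuclideanSpace ℝ (Fin n) × EuclideanSpace ℝ (Fin n) |
      (q.1 ∈ E) = (q.2 ∈ E)} := by
    have : {q : EuclideanSpace ℝ (Fin n) × EuclideanSpace ℝ (Fin n) | (q.1 ∈ E) = (q.2 ∈ E)}
        = (E ×ˢ E) ∪ (Eᶜ ×ˢ Eᶜ) := by
      ext q
      simp only [mem_setOf_eq, mem_union, mem_prod, mem_compl_iff, eq_iff_iff]
      tauto
    rw [this]
    exact ((hE.prod hE).union (hE.compl.prod hE.compl))
  have hm : Measurable (fun p : EuclideanSpace ℝ (Fin n) × EuclideanSpace ℝ (Fin n) =>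
      (p.1, p.1 - p.2)) := measurable_fst.prodMk (measurable_fst.sub measurable_snd)
  have hDmeas : ∀ z, MeasurableSet (D z) := by
    intro z
    have : D z = (fun x : EuclideanSpace ℝ (Fin n) => (x, x - z)) ⁻¹'
        {q : _ × _ | (q.1 ∈ E) = (q.2 ∈ E)}ᶜ := rfl
    rw [this]
    exact (measurable_id.prodMk (measurable_id.sub measurable_const)) hprodset.compl
  -- Step 1: rewrite the double integral
  have hX : (∫⁻ x, ∫⁻ y, (if (x ∈ E) = (y ∈ E) then 0 else K (x - y)))
      = ∫⁻ z, K z * volume (D z) := by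
    have step1 : ∀ x : EuclideanSpace ℝ (Fin n),
        (∫⁻ y, (if (x ∈ E) = (y ∈ E) then 0 else K (x - y)))
          = ∫⁻ z, (if (x ∈ E) = ((x - z) ∈ E) then 0 else K z) := by
      intro x
      have hmp : MeasurePreserving (fun z : EuclideanSpace ℝ (Fin n) => x - z)
          volume volume := Measure.measurePreserving_sub_left volume x
      have hg : Measurable (fun y : EuclideanSpace ℝ (Fin n) =>
          (if (x ∈ E) = (y ∈ E) then 0 else K (x - y))) := by
        refine Measurable.ite ?_ measurable_const (hKmeas.comp (measurable_const.sub measurable_id))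
        by_cases hx : x ∈ E
        · have : {y : EuclideanSpace ℝ (Fin n) | (x ∈ E) = (y ∈ E)} = E := by
            ext y; simp [hx, eq_iff_iff]
          rw [this]; exact hE
        · have : {y : EuclideanSpace ℝ (Fin n) | (x ∈ E) = (y ∈ E)} = Eᶜ := by
            ext y; simp [hx, eq_iff_iff]
          rw [this]; exact hE.compl
      rw [← hmp.lintegral_comp hg]
      congr 1
      funext z
      have : x - (x - z) = z := sub_sub_cancel x z
      rw [this]
    calc (∫⁻ x, ∫⁻ y, (if (x ∈ E) = (y ∈ E) then 0 else K (x - y)))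
        = ∫⁻ x, ∫⁻ z, (if (x ∈ E) = ((x - z) ∈ E) then 0 else K z) := by
          exact lintegral_congr step1
      _ = ∫⁻ z, ∫⁻ x, (if (x ∈ E) = ((x - z) ∈ E) then 0 else K z) := by
          refine lintegral_lintegral_swap ?_
          refine Measurable.aemeasurable ?_
          show Measurable fun p : EuclideanSpace ℝ (Fin n) × EuclideanSpace ℝ (Fin n) =>
            if (p.1 ∈ E) = ((p.1 - p.2) ∈ E) then (0:ℝ≥0∞) else K p.2
          exact Measurable.ite (hm hprodset) measurable_const (hKmeas.comp measurable_snd)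
      _ = ∫⁻ z, K z * volume (D z) := by
          refine lintegral_congr fun z => ?_
          have heq : (fun x : EuclideanSpace ℝ (Fin n) =>
              (if (x ∈ E) = ((x - z) ∈ E) then 0 else K z))
              = (D z).indicator (fun _ => K z) := by
            funext x
            by_cases hx : (x ∈ E) = ((x - z) ∈ E)
            · rw [if_pos hx, indicator_of_notMem (by simpa [hD] using hx)]
            · rw [if_neg hx, indicator_of_mem (by simpa [hD] using hx)]
          calc (∫⁻ x, (if (x ∈ E) = ((x - z) ∈ E) then 0 else K z))
              = ∫⁻ x, (D z).indicator (fun _ => K z) x :=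
                lintegral_congr fun x => congrFun heq x
            _ = K z * volume (D z) := lintegral_indicator_const (hDmeas z) (K z)
  -- Step 2: pointwise bound
  have hpoint : ∀ z, K z * volume (D z) ≤ (2 * M) * (min 1 (ENNReal.ofReal ‖z‖) * K z) := by
    intro z
    have hD2 : volume (D z) ≤ 2 * volume E := by
      have hsub : D z ⊆ E ∪ (fun x => x - z) ⁻¹' E := by
        intro x hx
        by_cases hxE : x ∈ E
        · exact Or.inl hxE
        · refine Or.inr ?_
          by_contra hxz
          exact hx (by simp only [eq_iff_iff]; exact iff_of_false hxE hxz)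
      refine (measure_mono hsub).trans ((measure_union_le _ _).trans ?_)
      rw [(measurePreserving_sub_right volume z).measure_preimage hE.nullMeasurableSet]
      rw [two_mul]
    rcases eq_or_ne z 0 with rfl | hz
    · have : D 0 = ∅ := by
        ext x; simp [hD]
      rw [this]
      simp
    · have hD1 : volume (D z) ≤ ENNReal.ofReal ‖z‖ * μH[(n:ℝ)-1] (frontier E) := by
        have hsub : D z ⊆ {x | ∃ t ∈ Icc (0:ℝ) 1, x - t • z ∈ frontier E} := by
          intro x hx
          simp only [hD, mem_setOf_eq, eq_iff_iff] at hx
          set seg := (fun t : ℝ => x - t • z) '' Icc (0:ℝ) 1 with hseg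
          have hconn : IsPreconnected seg :=
            isPreconnected_Icc.image _ (Continuous.continuousOn (continuous_const.sub (continuous_id.smul continuous_const)))
          have hx0 : x ∈ seg := ⟨0, ⟨le_rfl, zero_le_one⟩, by simp⟩
          have hx1 : x - z ∈ seg := ⟨1, ⟨zero_le_one, le_rfl⟩, by simp⟩
          have hfr : (seg ∩ frontier E).Nonempty := by
            by_cases hxE : x ∈ E
            · have hxz : x - z ∉ E := fun h => hx ⟨fun _ => h, fun _ => hxE⟩
              exact seg_frontier hconn ⟨x, hx0, hxE⟩ ⟨x - z, hx1, hxz⟩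
            · have hxz : x - z ∈ E := by
                by_contra h
                exact hx ⟨fun h' => absurd h' hxE, fun h' => absurd h' h⟩
              exact seg_frontier hconn ⟨x - z, hx1, hxz⟩ ⟨x, hx0, hxE⟩
          obtain ⟨y, ⟨t, ht, rfl⟩, hyf⟩ := hfr
          exact ⟨t, ht, hyf⟩
        exact (measure_mono hsub).trans (volT _ z hz hper.ne)
      have hmin : volume (D z) ≤ 2 * M * min 1 (ENNReal.ofReal ‖z‖) := by
        rcases le_total (1 : ℝ≥0∞) (ENNReal.ofReal ‖z‖) with h | h
        · rw [min_eq_left h, mul_one]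
          exact hD2.trans (mul_le_mul' le_rfl (le_max_right _ _))
        · rw [min_eq_right h]
          calc volume (D z) ≤ ENNReal.ofReal ‖z‖ * μH[(n:ℝ)-1] (frontier E) := hD1
            _ = 2 * ((1/2) * μH[(n:ℝ)-1] (frontier E)) * ENNReal.ofReal ‖z‖ := by
                rw [← mul_assoc, show (2:ℝ≥0∞) * (1/2) = 1 by
                  rw [mul_one_div, ENNReal.div_self (by norm_num) (by norm_num)], one_mul,
                  mul_comm]
            _ ≤ 2 * M * ENNReal.ofReal ‖z‖ :=
                mul_le_mul' (mul_le_mul' le_rfl (le_max_left _ _)) le_rfl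
      calc K z * volume (D z) ≤ K z * (2 * M * min 1 (ENNReal.ofReal ‖z‖)) :=
            mul_le_mul' le_rfl hmin
        _ = (2 * M) * (min 1 (ENNReal.ofReal ‖z‖) * K z) := by ring
  -- Step 3: integrate
  have hMI : PK K E ≤ M * I := by
    have h1 : (∫⁻ z, K z * volume (D z)) ≤ 2 * M * I := by
      refine (lintegral_mono hpoint).trans ?_
      rw [lintegral_const_mul]
      exact ((measurable_const.min (ENNReal.measurable_ofReal.comp measurable_norm)).mul hKmeas)
    rw [PK, hX]
    calc (1/2 : ℝ≥0∞) * (∫⁻ z, K z * volume (D z)) ≤ (1/2) * (2 * M * I) :=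
          mul_le_mul' le_rfl h1
      _ = M * I := by
          rw [← mul_assoc, ← mul_assoc, show (1/2 : ℝ≥0∞) * 2 = 1 by
            rw [one_div, ENNReal.inv_mul_cancel (by norm_num) (by norm_num)], one_mul]
  refine ⟨hMI, lt_of_le_of_lt hMI ?_⟩
  refine ENNReal.mul_lt_top ?_ hKint
  exact max_lt (ENNReal.mul_lt_top (by norm_num) hper) hvol
end

section
/- Let φ : (0,+∞) → (0,+∞) and suppose there is an increasing function ψ : [0,+∞) → [0,+∞) such that for all R ≥ r ≥ 0 and all t > 0, R²φ(Rt) − r²φ(rt) ≥ ψ(R)φ(t) − ψ(r)φ(t). If A, B ⊂ ℝ are bounded intervals with |A| ≤ |B|, then P_φ(A) + c_φ (ψ(|B|) − ψ(|A|)) ≤ P_φ(B), where c_φ = P_φ((0,1)). -/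
open MeasureTheory Set
open scoped ENNReal

/-- The one-dimensional non-local perimeter with radial kernel `φ`. -/
noncomputable def Pphi1 (φ : ℝ → ℝ) (A : Set ℝ) : ℝ≥0∞ :=
  ∫⁻ x in A, ∫⁻ y in Aᶜ, ENNReal.ofReal (φ |x - y|)

/-- Rescaled reference double integral. -/
noncomputable def Jphi (φ : ℝ → ℝ) (L : ℝ) : ℝ≥0∞ :=
  ∫⁻ u in Set.Ioo (0:ℝ) 1, ∫⁻ v in (Set.Ioo (0:ℝ) 1)ᶜ, ENNReal.ofReal (φ (L * |u - v|))

private lemma setLIntegral_affine (L a : ℝ) (hL : 0 < L) {S : Set ℝ} (hS : MeasurableSet S)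
    (f : ℝ → ℝ≥0∞) :
    ∫⁻ y in S, f y = ENNReal.ofReal L * ∫⁻ x in (fun x : ℝ => L * x + a) ⁻¹' S, f (L * x + a) := by
  set e : ℝ ≃ᵐ ℝ := (affineHomeomorph L a hL.ne').toMeasurableEquiv with he
  have hecoe : ∀ x : ℝ, e x = L * x + a := fun x => rfl
  have hmap : Measure.map e volume = ENNReal.ofReal L⁻¹ • volume := by
    have hcomp : (⇑e : ℝ → ℝ) = (fun x : ℝ => x + a) ∘ (fun x : ℝ => L * x) := rfl
    rw [hcomp, ← Measure.map_map (measurable_add_const a) (measurable_const_mul L),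
      Real.map_volume_mul_left hL.ne', Measure.map_smul, map_add_right_eq_self,
      abs_of_pos (inv_pos.mpr hL)]
  have key : ∫⁻ x in (fun x : ℝ => L * x + a) ⁻¹' S, f (L * x + a)
      = ENNReal.ofReal L⁻¹ * ∫⁻ y in S, f y := by
    have hpre : MeasurableSet ((fun x : ℝ => L * x + a) ⁻¹' S) :=
      hS.preimage (by fun_prop)
    rw [← lintegral_indicator hpre, ← lintegral_indicator hS]
    have hind : ∀ x : ℝ, ((fun x : ℝ => L * x + a) ⁻¹' S).indicator
        (fun x => f (L * x + a)) x = S.indicator f (e x) := by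
      intro x
      by_cases hx : L * x + a ∈ S <;>
        simp [Set.indicator, Set.mem_preimage, hx, hecoe]
    simp_rw [hind]
    rw [← lintegral_map_equiv (S.indicator f) e, hmap, lintegral_smul_measure, smul_eq_mul]
  rw [key, ← mul_assoc, ← ENNReal.ofReal_mul hL.le, mul_inv_cancel₀ hL.ne',
    ENNReal.ofReal_one, one_mul]

private lemma Pphi1_Ioo (φ : ℝ → ℝ) (a b : ℝ) (hab : a ≤ b) :
    Pphi1 φ (Set.Ioo a b) =
      ENNReal.ofReal (b - a) * (ENNReal.ofReal (b - a) * Jphi φ (b - a)) := by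
  rcases eq_or_lt_of_le hab with h | h
  · subst h
    simp [Pphi1]
  · set L := b - a with hLdef
    have hL : 0 < L := sub_pos.mpr h
    have hpre : (fun x : ℝ => L * x + a) ⁻¹' (Set.Ioo a b) = Set.Ioo (0:ℝ) 1 := by
      ext x
      simp only [Set.mem_preimage, Set.mem_Ioo]
      constructor
      · rintro ⟨h1, h2⟩
        constructor <;> nlinarith
      · rintro ⟨h1, h2⟩
        constructor <;> nlinarith
    have hprec : (fun x : ℝ => L * x + a) ⁻¹' (Set.Ioo a b)ᶜ = (Set.Ioo (0:ℝ) 1)ᶜ := by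
      rw [Set.preimage_compl, hpre]
    unfold Pphi1
    rw [setLIntegral_affine L a hL measurableSet_Ioo, hpre]
    congr 1
    unfold Jphi
    rw [← lintegral_const_mul' (ENNReal.ofReal L) _ ENNReal.ofReal_ne_top]
    apply lintegral_congr
    intro u
    rw [setLIntegral_affine L a hL measurableSet_Ioo.compl
      (fun y => ENNReal.ofReal (φ |L * u + a - y|)), hprec]
    congr 1
    apply lintegral_congr
    intro v
    congr 2
    have : L * u + a - (L * v + a) = L * (u - v) := by ring
    rw [this, abs_mul, abs_of_pos hL]

private lemma setLIntegral_mono_noMeas {s : Set ℝ} (hs : MeasurableSet s)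
    {f g : ℝ → ℝ≥0∞} (h : ∀ x ∈ s, f x ≤ g x) :
    ∫⁻ x in s, f x ≤ ∫⁻ x in s, g x :=
  setLIntegral_mono' hs h

private lemma scale_eq (φ : ℝ → ℝ) (L : ℝ) (hL : 0 ≤ L) :
    ENNReal.ofReal L * (ENNReal.ofReal L * Jphi φ L) =
      ∫⁻ u in Set.Ioo (0:ℝ) 1, ∫⁻ v in (Set.Ioo (0:ℝ) 1)ᶜ,
        ENNReal.ofReal (L ^ 2 * φ (L * |u - v|)) := by
  have hsq : ENNReal.ofReal L * ENNReal.ofReal L = ENNReal.ofReal (L ^ 2) := by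
    rw [← ENNReal.ofReal_mul hL, sq]
  rw [← mul_assoc, hsq]
  unfold Jphi
  rw [← lintegral_const_mul' (ENNReal.ofReal (L ^ 2)) _ ENNReal.ofReal_ne_top]
  apply lintegral_congr
  intro u
  rw [← lintegral_const_mul' (ENNReal.ofReal (L ^ 2)) _ ENNReal.ofReal_ne_top]
  apply lintegral_congr
  intro v
  rw [← ENNReal.ofReal_mul (sq_nonneg L)]

private lemma Jmain (φ : ℝ → ℝ) (hφpos : ∀ t : ℝ, 0 < t → 0 < φ t)
    (ψ : ℝ → ℝ) (hψ : MonotoneOn ψ (Set.Ici 0))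
    (hineq : ∀ R r t : ℝ, 0 ≤ r → r ≤ R → 0 < t →
      (ψ R - ψ r) * φ t ≤ R ^ 2 * φ (R * t) - r ^ 2 * φ (r * t))
    (r R : ℝ) (hr : 0 ≤ r) (hrR : r ≤ R) :
    ENNReal.ofReal r * (ENNReal.ofReal r * Jphi φ r) +
        Jphi φ 1 * ENNReal.ofReal (ψ R - ψ r) ≤
      ENNReal.ofReal R * (ENNReal.ofReal R * Jphi φ R) := by
  have hR : 0 ≤ R := hr.trans hrR
  have hcnn : 0 ≤ ψ R - ψ r := sub_nonneg.mpr (hψ (mem_Ici.mpr hr) (mem_Ici.mpr hR) hrR)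
  have h2 : Jphi φ 1 * ENNReal.ofReal (ψ R - ψ r) =
      ∫⁻ u in Set.Ioo (0:ℝ) 1, ∫⁻ v in (Set.Ioo (0:ℝ) 1)ᶜ,
        ENNReal.ofReal ((ψ R - ψ r) * φ |u - v|) := by
    unfold Jphi
    rw [← lintegral_mul_const' (ENNReal.ofReal (ψ R - ψ r)) _ ENNReal.ofReal_ne_top]
    apply lintegral_congr
    intro u
    rw [← lintegral_mul_const' (ENNReal.ofReal (ψ R - ψ r)) _ ENNReal.ofReal_ne_top]
    apply lintegral_congr
    intro v
    rw [← ENNReal.ofReal_mul' hcnn, one_mul, mul_comm]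
  rw [scale_eq φ r hr, scale_eq φ R hR, h2]
  refine le_trans (le_lintegral_add _ _) ?_
  apply setLIntegral_mono_noMeas measurableSet_Ioo
  intro u hu
  refine le_trans (le_lintegral_add _ _) ?_
  apply setLIntegral_mono_noMeas measurableSet_Ioo.compl
  intro v hv
  have huv : u ≠ v := fun h => hv (h ▸ hu)
  set t : ℝ := |u - v| with ht
  have htpos : 0 < t := abs_pos.mpr (sub_ne_zero.mpr huv)
  have hφt : 0 < φ t := hφpos t htpos
  have h1nn : 0 ≤ r ^ 2 * φ (r * t) := by
    rcases eq_or_lt_of_le hr with h | h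
    · simp [← h]
    · exact (mul_pos (pow_pos h 2) (hφpos _ (mul_pos h htpos))).le
  have h2nn : 0 ≤ (ψ R - ψ r) * φ t := mul_nonneg hcnn hφt.le
  rw [← ENNReal.ofReal_add h1nn h2nn]
  apply ENNReal.ofReal_le_ofReal
  have := hineq R r t hr hrR htpos
  linarith

theorem stmt7 (φ : ℝ → ℝ) (hφpos : ∀ t : ℝ, 0 < t → 0 < φ t)
    (ψ : ℝ → ℝ) (hψ : MonotoneOn ψ (Set.Ici 0)) (hψnn : ∀ t : ℝ, 0 ≤ t → 0 ≤ ψ t)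
    (hineq : ∀ R r t : ℝ, 0 ≤ r → r ≤ R → 0 < t →
      (ψ R - ψ r) * φ t ≤ R ^ 2 * φ (R * t) - r ^ 2 * φ (r * t))
    (a b c d : ℝ) (hab : a ≤ b) (hcd : c ≤ d) (hlen : b - a ≤ d - c) :
    Pphi1 φ (Set.Ioo a b) +
        Pphi1 φ (Set.Ioo 0 1) * ENNReal.ofReal (ψ (d - c) - ψ (b - a)) ≤
      Pphi1 φ (Set.Ioo c d) := by
  have hr : (0:ℝ) ≤ b - a := sub_nonneg.mpr hab
  have hP1 : Pphi1 φ (Set.Ioo (0:ℝ) 1) = Jphi φ 1 := by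
    unfold Pphi1 Jphi
    simp [one_mul]
  rw [Pphi1_Ioo φ a b hab, Pphi1_Ioo φ c d hcd, hP1]
  exact Jmain φ hφpos ψ hψ hineq (b - a) (d - c) hr hlen
end
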